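/- arXiv:1506.08150 — 2 statements merged into one kernel-verified Lean document; each statement's English description precedes it below -/
import Mathlib

section
/- Let 𝒯 be a convex tree of dyadic squares. For each k ∈ ℤ and each dyadic point (p,q) ∈ ∂T_k ∩ (2^kℤ × 2^kℤ) such that the square [p−2^k,p]×[q−2^k,q] does not belong to 𝒯_k, define S(p,q,k) := [p−2^k, p−2^{k−1}] × [q−2^k, q−2^{k−1}]. Then the squares S(p,q,k), ranging over all such triples (p,q,k), are pairwise almost disjoint (any two distinct ones intersect in a set of Lebesgue measure zero), and each is contained in 3R_𝒯, the cube with the same center as the root R_𝒯 and three times its sidelength. -/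
open MeasureTheory Set

noncomputable section

/-- The dyadic square with scale parameter `a.1` and position `(a.2.1, a.2.2)`. -/
def dSq (a : ℤ × ℤ × ℤ) : Set (ℝ × ℝ) :=
  Icc ((2:ℝ)^a.1 * (a.2.1 : ℝ)) ((2:ℝ)^a.1 * ((a.2.1 : ℝ) + 1)) ×ˢ
    Icc ((2:ℝ)^a.1 * (a.2.2 : ℝ)) ((2:ℝ)^a.1 * ((a.2.2 : ℝ) + 1))

/-- A convex tree of dyadic squares. -/
structure ConvexTree where
  squares : Finset (ℤ × ℤ × ℤ)
  root : ℤ × ℤ × ℤ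
  root_mem : root ∈ squares
  subset_root : ∀ a ∈ squares, dSq a ⊆ dSq root
  convex : ∀ a b c : ℤ × ℤ × ℤ, a ∈ squares → c ∈ squares →
    dSq a ⊆ dSq b → dSq b ⊆ dSq c → b ∈ squares

/-- `𝒯_k`: parameters of squares of the tree of sidelength `2^k`. -/
def treeLevel (T : ConvexTree) (k : ℤ) : Set (ℤ × ℤ × ℤ) :=
  {a | a ∈ T.squares ∧ a.1 = k}

/-- `T_k`: union of the squares of sidelength `2^k` in the tree. -/
def Tk (T : ConvexTree) (k : ℤ) : Set (ℝ × ℝ) :=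
  ⋃ a ∈ treeLevel T k, dSq a

/-- The Whitney region `Ω_𝒞` in the upper half space. -/
def Omega (C : Set (ℤ × ℤ × ℤ)) : Set ((ℝ × ℝ) × ℝ) :=
  ⋃ a ∈ C, dSq a ×ˢ Icc ((2:ℝ)^a.1 / 2) ((2:ℝ)^a.1)

/-- Euclidean norm on `ℝ²`. -/
def en (z : ℝ × ℝ) : ℝ := Real.sqrt (z.1^2 + z.2^2)

/-- `θ(x,y) = (1+|(x,y)|⁴)⁻¹`. -/
def theta (z : ℝ × ℝ) : ℝ := (1 + en z ^ 4)⁻¹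

/-- `ϑ(x) = (1+|x|)⁻⁴`. -/
def vth (x : ℝ) : ℝ := ((1 + |x|)^4)⁻¹

/-- `F² * [θ]_t (p,q)`. -/
def convTheta (F : ℝ × ℝ → ℝ) (p q t : ℝ) : ℝ :=
  ∫ z : ℝ × ℝ, (F z)^2 * ((t^2)⁻¹ * theta ((p - z.1)/t, (q - z.2)/t))

/-- `M(F, 𝒞)`. -/
def Msize (F : ℝ × ℝ → ℝ) (C : Set (ℤ × ℤ × ℤ)) : ℝ :=
  ⨆ w : Omega C, Real.sqrt (convTheta F w.1.1.1 w.1.1.2 w.1.2)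

/-- `F * [φ₁⊗φ₂⊗φ₃⊗φ₄]_t (p,q,p,q)` where `F` is the entangled product of `F₁,F₂,F₃,F₄`. -/
def entConv (F1 F2 F3 F4 : ℝ × ℝ → ℝ) (φ1 φ2 φ3 φ4 : ℝ → ℝ) (t p q : ℝ) : ℝ :=
  ∫ x : ℝ, ∫ y : ℝ, ∫ x' : ℝ, ∫ y' : ℝ,
    F1 (x, y) * F2 (x', y) * F3 (x', y') * F4 (x, y') *
      (t⁻¹ * φ1 ((p - x)/t)) * (t⁻¹ * φ2 ((q - y)/t)) *
      (t⁻¹ * φ3 ((p - x')/t)) * (t⁻¹ * φ4 ((q - y')/t))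

/-- The local form `Θ^𝒞_{φ₁,φ₂,φ₃,φ₄}`. -/
def Theta (C : Set (ℤ × ℤ × ℤ)) (φ1 φ2 φ3 φ4 : ℝ → ℝ)
    (F1 F2 F3 F4 : ℝ × ℝ → ℝ) : ℝ :=
  ∫ w in Omega C, entConv F1 F2 F3 F4 φ1 φ2 φ3 φ4 w.2 w.1.1 w.1.2 / w.2

/-- Bounded, positive, measurable with finite measure support. -/
def Nice (F : ℝ × ℝ → ℝ) : Prop :=
  Measurable F ∧ (∃ C : ℝ, ∀ z, |F z| ≤ C) ∧
    volume (Function.support F) < ⊤ ∧ ∀ z, 0 ≤ F z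

/-- The lattice `2^kℤ × 2^kℤ`. -/
def latt (k : ℤ) : Set (ℝ × ℝ) :=
  {z | ∃ m n : ℤ, z.1 = (2:ℝ)^k * m ∧ z.2 = (2:ℝ)^k * n}

/-- `Δ(𝒯_k) = ∂T_k ∩ (2^kℤ × 2^kℤ)`. -/
def Delta (T : ConvexTree) (k : ℤ) : Set (ℝ × ℝ) := frontier (Tk T k) ∩ latt k

/-- The condition on the triple `(p,q,k)`: the point `(p,q)` is a dyadic point of `∂T_k`
and the square `[p-2^k,p]×[q-2^k,q]` does not belong to `𝒯_k`. -/
def ptCond (T : ConvexTree) (k : ℤ) (p q : ℝ) : Prop :=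
  (p, q) ∈ Delta T k ∧
    ∀ a ∈ treeLevel T k, dSq a ≠ Icc (p - (2:ℝ)^k) p ×ˢ Icc (q - (2:ℝ)^k) q

/-- The square `S(p,q,k) = [p-2^k, p-2^{k-1}] × [q-2^k, q-2^{k-1}]`. -/
def Spq (k : ℤ) (p q : ℝ) : Set (ℝ × ℝ) :=
  Icc (p - (2:ℝ)^k) (p - (2:ℝ)^k / 2) ×ˢ Icc (q - (2:ℝ)^k) (q - (2:ℝ)^k / 2)

/-- `3R`: the square with the same center as the dyadic square `dSq a` and three times
its sidelength. -/
def threeSq (a : ℤ × ℤ × ℤ) : Set (ℝ × ℝ) :=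
  Icc ((2:ℝ)^a.1 * ((a.2.1 : ℝ) - 1)) ((2:ℝ)^a.1 * ((a.2.1 : ℝ) + 2)) ×ˢ
    Icc ((2:ℝ)^a.1 * ((a.2.2 : ℝ) - 1)) ((2:ℝ)^a.1 * ((a.2.2 : ℝ) + 2))

lemma two_zpow_pos (k : ℤ) : (0:ℝ) < 2^k := zpow_pos (by norm_num) k

lemma two_zpow_mono {k l : ℤ} (h : k ≤ l) : (2:ℝ)^k ≤ 2^l :=
  zpow_le_zpow_right₀ one_le_two h

lemma vol_zero {a b c d a' b' c' d' : ℝ}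
    (h : min b b' ≤ max a a' ∨ min d d' ≤ max c c') :
    volume ((Icc a b ×ˢ Icc c d) ∩ (Icc a' b' ×ˢ Icc c' d')) = 0 := by
  rw [Set.prod_inter_prod, Icc_inter_Icc, Icc_inter_Icc,
    Measure.volume_eq_prod, Measure.prod_prod, Real.volume_Icc, Real.volume_Icc]
  rcases h with h | h
  · have h0 : ENNReal.ofReal (b ⊓ b' - a ⊔ a') = 0 :=
      ENNReal.ofReal_eq_zero.2 (by rw [sub_nonpos]; exact h)
    rw [h0, zero_mul]
  · have h0 : ENNReal.ofReal (d ⊓ d' - c ⊔ c') = 0 :=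
      ENNReal.ofReal_eq_zero.2 (by rw [sub_nonpos]; exact h)
    rw [h0, mul_zero]

lemma int_div_bounds (D m : ℤ) (hD : 0 < D) :
    D * (m / D) ≤ m ∧ m + 1 ≤ D * (m / D + 1) := by
  have h1 := Int.mul_ediv_add_emod m D
  have h2 := Int.emod_nonneg m (ne_of_gt hD)
  have h3 := Int.emod_lt_of_pos m hD
  constructor <;> nlinarith

lemma int_div_between (D F m M : ℤ) (hD : 0 < D) (h1 : D * F * M ≤ m)
    (h2 : m + 1 ≤ D * F * (M+1)) : F * M ≤ m / D ∧ m / D + 1 ≤ F * (M + 1) := by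
  obtain ⟨a1, a2⟩ := int_div_bounds D m hD
  constructor
  · by_contra hc; push_neg at hc
    have h3 : m / D + 1 ≤ F * M := by omega
    nlinarith
  · by_contra hc; push_neg at hc
    have h3 : F * (M+1) ≤ m / D := by omega
    nlinarith

lemma zpow_split {k l : ℤ} (h : k ≤ l) :
    (2:ℝ)^l = (2:ℝ)^k * (((2:ℤ)^(l-k).toNat : ℤ) : ℝ) := by
  have h2 : (((2:ℤ)^(l-k).toNat : ℤ) : ℝ) = (2:ℝ)^((l-k) : ℤ) := by
    push_cast
    rw [← zpow_natCast (2:ℝ), Int.toNat_of_nonneg (by omega)]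
  rw [h2, ← zpow_add₀ (two_ne_zero), add_sub_cancel]

lemma mem_dSq {a : ℤ × ℤ × ℤ} {z : ℝ × ℝ} : z ∈ dSq a ↔
    ((2:ℝ)^a.1 * a.2.1 ≤ z.1 ∧ z.1 ≤ (2:ℝ)^a.1 * (a.2.1+1)) ∧
    ((2:ℝ)^a.1 * a.2.2 ≤ z.2 ∧ z.2 ≤ (2:ℝ)^a.1 * (a.2.2+1)) := by
  simp [dSq, Set.mem_prod, Set.mem_Icc, Prod.le_def]
  tauto

lemma dSq_subset_of_coords {j u v j' u' v' : ℤ}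
    (h1 : (2:ℝ)^j' * u' ≤ 2^j * u) (h2 : (2:ℝ)^j * (u+1) ≤ 2^j' * (u'+1))
    (h3 : (2:ℝ)^j' * v' ≤ 2^j * v) (h4 : (2:ℝ)^j * (v+1) ≤ 2^j' * (v'+1)) :
    dSq (j,u,v) ⊆ dSq (j',u',v') :=
  Set.prod_mono (Set.Icc_subset_Icc h1 h2) (Set.Icc_subset_Icc h3 h4)

lemma coords_of_dSq_subset {a b : ℤ × ℤ × ℤ} (h : dSq a ⊆ dSq b) :
    ((2:ℝ)^b.1 * b.2.1 ≤ 2^a.1 * a.2.1 ∧ (2:ℝ)^a.1 * (a.2.1+1) ≤ 2^b.1 * (b.2.1+1)) ∧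
    ((2:ℝ)^b.1 * b.2.2 ≤ 2^a.1 * a.2.2 ∧ (2:ℝ)^a.1 * (a.2.2+1) ≤ 2^b.1 * (b.2.2+1)) := by
  have hp := two_zpow_pos a.1
  have c1 : ((2:ℝ)^a.1 * a.2.1, (2:ℝ)^a.1 * a.2.2) ∈ dSq a := by
    rw [mem_dSq]
    simp only [Prod.fst, Prod.snd]
    constructor <;> constructor <;> nlinarith
  have c2 : ((2:ℝ)^a.1 * (a.2.1+1), (2:ℝ)^a.1 * (a.2.2+1)) ∈ dSq a := by
    rw [mem_dSq]
    simp only [Prod.fst, Prod.snd]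
    constructor <;> constructor <;> nlinarith
  have m1 := mem_dSq.1 (h c1)
  have m2 := mem_dSq.1 (h c2)
  simp only [Prod.fst, Prod.snd] at m1 m2
  exact ⟨⟨m1.1.1, m2.1.2⟩, ⟨m1.2.1, m2.2.2⟩⟩

lemma level_le_root (T : ConvexTree) {a : ℤ × ℤ × ℤ} (ha : a ∈ T.squares) :
    a.1 ≤ T.root.1 := by
  obtain ⟨⟨h1, h2⟩, -⟩ := coords_of_dSq_subset (T.subset_root a ha)
  have : (2:ℝ)^a.1 ≤ 2^T.root.1 := by
    have := two_zpow_pos T.root.1; nlinarith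
  exact (zpow_le_zpow_iff_right₀ (by norm_num : (1:ℝ) < 2)).1 this

lemma zmul_le {l u v : ℤ} (h : u ≤ v) : (2:ℝ)^l * u ≤ 2^l * v := by
  have h1 := two_zpow_pos l
  have h2 : (u:ℝ) ≤ v := Int.cast_le.2 h
  nlinarith

lemma zlt_of_real {l u v : ℤ} (h : (2:ℝ)^l * u < 2^l * v) : u < v := by
  by_contra hc; push_neg at hc
  exact absurd (zmul_le hc) (not_le.2 h)

lemma real_coord_le {k l : ℤ} (h : k ≤ l) (u v : ℤ) :
    (2:ℝ)^l * u ≤ 2^k * v ↔ (2:ℤ)^(l-k).toNat * u ≤ v := by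
  rw [zpow_split h, mul_assoc, mul_le_mul_iff_right₀ (two_zpow_pos k)]
  exact_mod_cast Iff.rfl

lemma real_coord_le' {k l : ℤ} (h : k ≤ l) (u v : ℤ) :
    (2:ℝ)^k * v ≤ 2^l * u ↔ v ≤ (2:ℤ)^(l-k).toNat * u := by
  rw [zpow_split h, mul_assoc, mul_le_mul_iff_right₀ (two_zpow_pos k)]
  exact_mod_cast Iff.rfl

lemma real_coord_le₂ {k l : ℤ} (h : k ≤ l) (u v : ℤ) :
    (2:ℝ)^k * ((v:ℝ)+1) ≤ 2^l * ((u:ℝ)+1) ↔ v + 1 ≤ (2:ℤ)^(l-k).toNat * (u+1) := by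
  have h2 := real_coord_le' h (u+1) (v+1)
  push_cast at h2
  exact h2

lemma ascend (T : ConvexTree) {a : ℤ × ℤ × ℤ} (ha : a ∈ T.squares) {k' : ℤ}
    (h1 : a.1 ≤ k') (h2 : k' ≤ T.root.1) :
    ∃ b ∈ T.squares, b.1 = k' ∧ dSq a ⊆ dSq b := by
  obtain ⟨k, m, n⟩ := a
  obtain ⟨⟨hr1, hr2⟩, hr3, hr4⟩ := coords_of_dSq_subset (T.subset_root _ ha)
  simp only at h1 hr1 hr2 hr3 hr4
  have hkK : k ≤ T.root.1 := le_trans h1 h2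
  have hDpos : (0:ℤ) < 2^(k'-k).toNat := pow_pos (by norm_num) _
  have hDF : (2:ℤ)^(k'-k).toNat * 2^(T.root.1-k').toNat = 2^(T.root.1-k).toNat := by
    rw [← pow_add]; congr 1; omega
  have hbm := int_div_bounds ((2:ℤ)^(k'-k).toNat) m hDpos
  have hbn := int_div_bounds ((2:ℤ)^(k'-k).toNat) n hDpos
  have hab : dSq (k, m, n) ⊆ dSq (k', m / 2^(k'-k).toNat, n / 2^(k'-k).toNat) :=
    dSq_subset_of_coords
      ((real_coord_le h1 _ m).2 hbm.1) ((real_coord_le₂ h1 _ m).2 hbm.2)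
      ((real_coord_le h1 _ n).2 hbn.1) ((real_coord_le₂ h1 _ n).2 hbn.2)
  have hm := int_div_between ((2:ℤ)^(k'-k).toNat) ((2:ℤ)^(T.root.1-k').toNat) m T.root.2.1 hDpos
    (by rw [hDF]; exact (real_coord_le hkK _ m).1 hr1)
    (by rw [hDF]; exact (real_coord_le₂ hkK _ m).1 hr2)
  have hn := int_div_between ((2:ℤ)^(k'-k).toNat) ((2:ℤ)^(T.root.1-k').toNat) n T.root.2.2 hDpos
    (by rw [hDF]; exact (real_coord_le hkK _ n).1 hr3)
    (by rw [hDF]; exact (real_coord_le₂ hkK _ n).1 hr4)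
  have hbroot : dSq (k', m / 2^(k'-k).toNat, n / 2^(k'-k).toNat) ⊆ dSq T.root := by
    have hroot : T.root = (T.root.1, T.root.2.1, T.root.2.2) := rfl
    rw [hroot]
    exact dSq_subset_of_coords
      ((real_coord_le h2 _ _).2 hm.1) ((real_coord_le₂ h2 _ _).2 hm.2)
      ((real_coord_le h2 _ _).2 hn.1) ((real_coord_le₂ h2 _ _).2 hn.2)
  exact ⟨_, T.convex _ _ T.root ha T.root_mem hab hbroot, rfl, hab⟩

lemma isClosed_Tk (T : ConvexTree) (k : ℤ) : IsClosed (Tk T k) := by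
  apply Set.Finite.isClosed_biUnion
  · exact T.squares.finite_toSet.subset (fun a ha => ha.1)
  · intro a _
    exact IsClosed.prod isClosed_Icc isClosed_Icc

lemma ptCond_data (T : ConvexTree) {k : ℤ} {p q : ℝ} (h : ptCond T k p q) :
    ∃ m n : ℤ, p = 2^k * m ∧ q = 2^k * n ∧
      ∃ a ∈ T.squares, a.1 = k ∧ (p,q) ∈ dSq a := by
  obtain ⟨⟨hf, m, n, hp, hq⟩, -⟩ := h
  have hmem : (p,q) ∈ Tk T k :=
    (isClosed_Tk T k).closure_eq ▸ frontier_subset_closure hf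
  simp only [Tk, treeLevel, Set.mem_iUnion, Set.mem_setOf_eq] at hmem
  obtain ⟨a, ⟨haS, hak⟩, hmem⟩ := hmem
  exact ⟨m, n, hp, hq, a, haS, hak, hmem⟩

lemma minmax {a b a' b' : ℝ} (h : b ≤ a' ∨ b' ≤ a) : min b b' ≤ max a a' := by
  rcases h with h|h
  · exact le_trans (min_le_left _ _) (h.trans (le_max_right _ _))
  · exact le_trans (min_le_right _ _) (h.trans (le_max_left _ _))

lemma sep_coord {k k' m m' : ℤ} {p p' : ℝ} (hkk' : k ≤ k')
    (hp : p = 2^k * m) (hp' : p' = 2^k' * m')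
    (hx : (m-1) / 2^(k'-k).toNat ≠ m'-1) :
    p - 2^k/2 ≤ p' - 2^k' ∨ p' - 2^k'/2 ≤ p - 2^k := by
  have hDpos : (0:ℤ) < 2^(k'-k).toNat := pow_pos (by norm_num) _
  have hbm := int_div_bounds ((2:ℤ)^(k'-k).toNat) (m-1) hDpos
  have r1 := (real_coord_le hkk' ((m-1)/2^(k'-k).toNat) (m-1)).2 hbm.1
  have r2 := (real_coord_le₂ hkk' ((m-1)/2^(k'-k).toNat) (m-1)).2 hbm.2
  push_cast at r1 r2
  have hpk := two_zpow_pos k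
  have hpk' := two_zpow_pos k'
  rcases lt_or_gt_of_ne hx with hlt | hgt
  · left
    have hc : (((m-1)/2^(k'-k).toNat : ℤ) : ℝ) + 1 ≤ (m' : ℝ) - 1 := by
      exact_mod_cast (by omega : ((m-1)/2^(k'-k).toNat : ℤ) + 1 ≤ m' - 1)
    have hc2 : (2:ℝ)^k' * ((((m-1)/2^(k'-k).toNat : ℤ) : ℝ) + 1) ≤ 2^k' * ((m':ℝ)-1) := by
      nlinarith
    rw [hp, hp']; nlinarith [r2]
  · right
    have hc : (m' : ℝ) ≤ (((m-1)/2^(k'-k).toNat : ℤ) : ℝ) := by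
      exact_mod_cast (by omega : m' ≤ (m-1)/2^(k'-k).toNat)
    have hc2 : (2:ℝ)^k' * (m':ℝ) ≤ 2^k' * (((m-1)/2^(k'-k).toNat : ℤ) : ℝ) := by
      nlinarith
    rw [hp, hp']; nlinarith [r1]

lemma key_lt (T : ConvexTree) {k k' : ℤ} {p q p' q' : ℝ} (h : ptCond T k p q)
    (h' : ptCond T k' p' q') (hkk : k < k') :
    volume (Spq k p q ∩ Spq k' p' q') = 0 := by
  obtain ⟨m, n, hp, hq, a, haS, hak, hamem⟩ := ptCond_data T h
  obtain ⟨m', n', hp', hq', a', ha'S, ha'k, -⟩ := ptCond_data T h'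
  have hkk' : k ≤ k' := le_of_lt hkk
  have hK : k' ≤ T.root.1 := ha'k ▸ level_le_root T ha'S
  have hDpos : (0:ℤ) < 2^(k'-k).toNat := pow_pos (by norm_num) _
  have hpk := two_zpow_pos k
  have hpk' := two_zpow_pos k'
  rw [Spq, Spq]
  apply vol_zero
  by_cases hx : (m-1) / 2^(k'-k).toNat = m'-1
  · by_cases hy : (n-1) / 2^(k'-k).toNat = n'-1
    · -- the dyadic ancestor of Q at level k' is exactly Q'
      obtain ⟨b, hbS, hbk, hab⟩ := ascend T haS (by rw [hak]; exact hkk') hK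
      have hmemb := mem_dSq.1 (hab hamem)
      rw [hbk] at hmemb
      simp only [Prod.fst, Prod.snd] at hmemb
      obtain ⟨⟨hb1, hb2⟩, hb3, hb4⟩ := hmemb
      -- Q ⊆ Q' in coordinates
      have hbm := int_div_bounds ((2:ℤ)^(k'-k).toNat) (m-1) hDpos
      have hbn := int_div_bounds ((2:ℤ)^(k'-k).toNat) (n-1) hDpos
      rw [hx] at hbm
      rw [hy] at hbn
      have r1 := (real_coord_le hkk' (m'-1) (m-1)).2 hbm.1
      have r2 := (real_coord_le₂ hkk' (m'-1) (m-1)).2 hbm.2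
      have r3 := (real_coord_le hkk' (n'-1) (n-1)).2 hbn.1
      have r4 := (real_coord_le₂ hkk' (n'-1) (n-1)).2 hbn.2
      push_cast at r1 r2 r3 r4
      -- the level-k' tree square b containing (p,q) is different from Q'
      have hbne : b.2.1 ≠ m'-1 ∨ b.2.2 ≠ n'-1 := by
        by_contra hc
        push_neg at hc
        apply h'.2 b ⟨hbS, hbk⟩
        have hb : b = (k', m'-1, n'-1) := Prod.ext hbk (Prod.ext hc.1 hc.2)
        rw [hb]
        unfold dSq
        simp only [Prod.fst, Prod.snd]
        rw [hp', hq']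
        push_cast
        have e1 : (2:ℝ)^k' * ((m':ℝ) - 1) = 2^k' * (m':ℝ) - 2^k' := by ring
        have e2 : (2:ℝ)^k' * ((m':ℝ) - 1 + 1) = 2^k' * (m':ℝ) := by ring
        have e3 : (2:ℝ)^k' * ((n':ℝ) - 1) = 2^k' * (n':ℝ) - 2^k' := by ring
        have e4 : (2:ℝ)^k' * ((n':ℝ) - 1 + 1) = 2^k' * (n':ℝ) := by ring
        rw [e1, e2, e3, e4]
      -- conclude p = p' or q = q'
      have hple : p ≤ p' := by rw [hp, hp']; linarith
      have hqle : q ≤ q' := by rw [hq, hq']; linarith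
      have hpq : p = p' ∨ q = q' := by
        by_contra hc
        push_neg at hc
        have hplt : p < p' := lt_of_le_of_ne hple hc.1
        have hqlt : q < q' := lt_of_le_of_ne hqle hc.2
        rcases hbne with hne | hne
        · have hint : b.2.1 < m' := by
            apply zlt_of_real (l := k')
            calc (2:ℝ)^k' * b.2.1 ≤ p := hb1
            _ < p' := hplt
            _ = 2^k' * m' := hp'
          have hint2 : (b.2.1 : ℝ) + 1 ≤ (m' : ℝ) - 1 := by
            exact_mod_cast (by omega : b.2.1 + 1 ≤ m' - 1)
          have : (2:ℝ)^k' * ((b.2.1:ℝ) + 1) ≤ 2^k' * ((m':ℝ) - 1) := by nlinarith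
          rw [hp] at hb2
          rw [hp] at hplt
          nlinarith
        · have hint : b.2.2 < n' := by
            apply zlt_of_real (l := k')
            calc (2:ℝ)^k' * b.2.2 ≤ q := hb3
            _ < q' := hqlt
            _ = 2^k' * n' := hq'
          have hint2 : (b.2.2 : ℝ) + 1 ≤ (n' : ℝ) - 1 := by
            exact_mod_cast (by omega : b.2.2 + 1 ≤ n' - 1)
          have : (2:ℝ)^k' * ((b.2.2:ℝ) + 1) ≤ 2^k' * ((n':ℝ) - 1) := by nlinarith
          rw [hq] at hb4
          rw [hq] at hqlt
          nlinarith
      -- finish using the scale gap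
      have hgap : (2:ℝ)^k ≤ 2^k'/2 := by
        have hsplit : (2:ℝ)^k' = 2^(k'-1) * 2 := by
          rw [← zpow_add_one₀ (two_ne_zero : (2:ℝ) ≠ 0)]
          congr 1
          omega
        have := two_zpow_mono (show k ≤ k'-1 by omega)
        rw [hsplit]
        linarith
      rcases hpq with he | he
      · exact Or.inl (minmax (Or.inr (by rw [← he]; linarith)))
      · exact Or.inr (minmax (Or.inr (by rw [← he]; linarith)))
    · exact Or.inr (minmax (sep_coord hkk' hq hq' hy))
  · exact Or.inl (minmax (sep_coord hkk' hp hp' hx))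

/-- The squares `S(p,q,k)` are pairwise almost disjoint and contained in `3R_𝒯`. -/
theorem spq_almost_disjoint (T : ConvexTree) (k : ℤ) (p q : ℝ) (h : ptCond T k p q) :
    Spq k p q ⊆ threeSq T.root ∧
      ∀ (k' : ℤ) (p' q' : ℝ), ptCond T k' p' q' → (k, p, q) ≠ (k', p', q') →
        volume (Spq k p q ∩ Spq k' p' q') = 0 := by
  constructor
  · obtain ⟨m, n, hp, hq, a, haS, hak, hamem⟩ := ptCond_data T h
    have hroot := mem_dSq.1 ((T.subset_root a haS) hamem)
    simp only [Prod.fst, Prod.snd] at hroot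
    have hkK : k ≤ T.root.1 := hak ▸ level_le_root T haS
    have h2 : (2:ℝ)^k ≤ 2^T.root.1 := two_zpow_mono hkK
    have hpk := two_zpow_pos k
    have hpK := two_zpow_pos T.root.1
    rw [Spq, threeSq]
    apply Set.prod_mono <;> apply Set.Icc_subset_Icc <;> [skip; skip; skip; skip]
    · linarith [hroot.1.1]
    · linarith [hroot.1.2]
    · linarith [hroot.2.1]
    · linarith [hroot.2.2]
  · intro k' p' q' h' hne
    rcases lt_trichotomy k k' with hlt | heq | hgt
    · exact key_lt T h h' hlt
    · subst heq
      obtain ⟨m, n, hp, hq, -⟩ := ptCond_data T h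
      obtain ⟨m', n', hp', hq', -⟩ := ptCond_data T h'
      have hne' : p ≠ p' ∨ q ≠ q' := by
        by_contra hc; push_neg at hc
        exact hne (by rw [hc.1, hc.2])
      rw [Spq, Spq]
      apply vol_zero
      have h0 : ∀ u : ℤ, u / 2^((k-k).toNat) = u := by intro u; simp
      rcases hne' with hne' | hne'
      · refine Or.inl (minmax (sep_coord (le_refl k) hp hp' ?_))
        rw [h0]
        have : m ≠ m' := fun hmm => hne' (by rw [hp, hp', hmm])
        omega
      · refine Or.inr (minmax (sep_coord (le_refl k) hq hq' ?_))
        rw [h0]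
        have : n ≠ n' := fun hmm => hne' (by rw [hq, hq', hmm])
        omega
    · rw [Set.inter_comm]
      exact key_lt T h' h hgt

end
end

section
/- There is an absolute constant C such that for every convex tree 𝒯 of dyadic squares, every k ∈ ℤ, and every bounded, positive, measurable function F on ℝ² with finite measure support, M(F·1_{T_k}, 𝒯_k^c) ≤ C · M(F, 𝒯); equivalently, for every (p,q,t) ∈ Ω_{𝒯_k^c} one has ((F²·1_{T_k}) * [θ]_t(p,q))^{1/2} ≤ C · sup_{(a,b,s)∈Ω_𝒯} (F² * [θ]_s(a,b))^{1/2}. -/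
open MeasureTheory Set

noncomputable section

/-! ### Auxiliary machinery -/

/-- The integrand of `convTheta`. -/
def core (F : ℝ × ℝ → ℝ) (p q t : ℝ) (z : ℝ × ℝ) : ℝ :=
  (F z)^2 * ((t^2)⁻¹ * theta ((p - z.1)/t, (q - z.2)/t))

lemma convTheta_eq (F : ℝ × ℝ → ℝ) (p q t : ℝ) :
    convTheta F p q t = ∫ z : ℝ × ℝ, core F p q t z := rfl

lemma theta_eq (z : ℝ × ℝ) : theta z = (1 + (z.1^2 + z.2^2)^2)⁻¹ := by
  have h : (0:ℝ) ≤ z.1^2 + z.2^2 := by positivity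
  rw [theta, en, show (4:ℕ) = 2*2 from rfl, pow_mul, Real.sq_sqrt h]

lemma theta_nonneg (z : ℝ × ℝ) : 0 ≤ theta z := by
  rw [theta_eq]; positivity

lemma theta_le_one (z : ℝ × ℝ) : theta z ≤ 1 := by
  rw [theta_eq]
  have h : (1:ℝ) ≤ 1 + (z.1^2 + z.2^2)^2 := by nlinarith [sq_nonneg (z.1^2 + z.2^2)]
  exact inv_le_one_of_one_le₀ h

lemma continuous_theta : Continuous theta := by
  have h1 : Continuous fun z : ℝ × ℝ => 1 + en z ^ 4 := by
    apply continuous_const.add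
    exact (Real.continuous_sqrt.comp (by fun_prop)).pow 4
  refine h1.inv₀ fun z => ?_
  have : (0:ℝ) ≤ en z := Real.sqrt_nonneg _
  positivity

lemma measurable_core {F : ℝ × ℝ → ℝ} (hF : Measurable F) (p q t : ℝ) :
    Measurable (core F p q t) := by
  have hc : Continuous fun z : ℝ × ℝ => theta ((p - z.1)/t, (q - z.2)/t) :=
    continuous_theta.comp (by fun_prop)
  exact (hF.pow_const 2).mul (hc.measurable.const_mul _)

lemma core_nonneg (F : ℝ × ℝ → ℝ) (p q t : ℝ) (z : ℝ × ℝ) : 0 ≤ core F p q t z :=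
  mul_nonneg (sq_nonneg _) (mul_nonneg (by positivity) (theta_nonneg _))

lemma core_le {F : ℝ × ℝ → ℝ} {CF : ℝ} (hCF : ∀ z, |F z| ≤ CF) {tmin t : ℝ}
    (h0 : 0 < tmin) (ht : tmin ≤ t) (p q : ℝ) (z : ℝ × ℝ) :
    core F p q t z ≤ (Function.support F).indicator (fun _ => CF^2 * (tmin^2)⁻¹) z := by
  by_cases hz : F z = 0
  · have h1 : core F p q t z = 0 := by simp [core, hz]
    rw [h1]
    exact Set.indicator_nonneg (fun y _ => by positivity) z
  · rw [Set.indicator_of_mem (Function.mem_support.2 hz)]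
    have h1 : (F z)^2 ≤ CF^2 := by
      have h := pow_le_pow_left₀ (abs_nonneg (F z)) (hCF z) 2
      rwa [sq_abs] at h
    have h2 : (t^2)⁻¹ * theta ((p - z.1)/t, (q - z.2)/t) ≤ (tmin^2)⁻¹ := by
      have hsq : tmin^2 ≤ t^2 := by nlinarith
      calc (t^2)⁻¹ * theta ((p - z.1)/t, (q - z.2)/t) ≤ (t^2)⁻¹ * 1 :=
            mul_le_mul_of_nonneg_left (theta_le_one _) (by positivity)
        _ = (t^2)⁻¹ := mul_one _
        _ ≤ (tmin^2)⁻¹ := inv_anti₀ (by positivity) hsq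
    exact mul_le_mul h1 h2 (mul_nonneg (by positivity) (theta_nonneg _)) (by positivity)

lemma integrable_indicator_supp {F : ℝ × ℝ → ℝ} (hF : Measurable F)
    (hsupp : volume (Function.support F) < ⊤) (c : ℝ) :
    Integrable ((Function.support F).indicator fun _ => c) volume :=
  (integrableOn_const hsupp.ne).integrable_indicator (measurableSet_support hF)

lemma integrable_core {F : ℝ × ℝ → ℝ} (hF : Nice F) (p q t : ℝ) :
    Integrable (core F p q t) volume := by
  obtain ⟨hm, ⟨CF, hCF⟩, hsupp, hpos⟩ := hF
  refine (integrable_indicator_supp hm hsupp (CF^2 * (|t|^2)⁻¹)).mono'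
    (measurable_core hm p q t).aestronglyMeasurable (Filter.Eventually.of_forall fun z => ?_)
  rw [Real.norm_eq_abs, abs_of_nonneg (core_nonneg F p q t z)]
  by_cases ht : t = 0
  · have h1 : core F p q t z = 0 := by simp [core, ht]
    rw [h1]
    exact Set.indicator_nonneg (fun y _ => by positivity) z
  · have h0 : 0 < |t| := abs_pos.2 ht
    have hcc : core F p q t z = core F p q |t| z := by
      rcases abs_choice t with h | h
      · rw [h]
      · rw [h]
        simp only [core]
        congr 2
        · rw [show (-t)^2 = t^2 by ring]
        · rw [theta_eq, theta_eq]
          simp only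
          rw [show (p - z.1)/(-t) = -((p-z.1)/t) by ring,
            show (q - z.2)/(-t) = -((q-z.2)/t) by ring]
          ring_nf
    rw [hcc]
    exact core_le hCF h0 (le_refl |t|) p q z

lemma convTheta_nonneg (F : ℝ × ℝ → ℝ) (p q t : ℝ) : 0 ≤ convTheta F p q t :=
  integral_nonneg (core_nonneg F p q t)

lemma convTheta_le (F : ℝ × ℝ → ℝ) (hm : Measurable F) {CF : ℝ} (hCF : ∀ z, |F z| ≤ CF)
    (hsupp : volume (Function.support F) < ⊤) {tmin t : ℝ} (h0 : 0 < tmin) (ht : tmin ≤ t)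
    (p q : ℝ) :
    convTheta F p q t ≤ CF^2 * (tmin^2)⁻¹ * (volume (Function.support F)).toReal := by
  rw [convTheta_eq]
  calc ∫ z : ℝ × ℝ, core F p q t z
      ≤ ∫ z : ℝ × ℝ, (Function.support F).indicator (fun _ => CF^2 * (tmin^2)⁻¹) z :=
        integral_mono_of_nonneg (Filter.Eventually.of_forall (core_nonneg F p q t))
          (integrable_indicator_supp hm hsupp _)
          (Filter.Eventually.of_forall (core_le hCF h0 ht p q))
    _ = CF^2 * (tmin^2)⁻¹ * (volume (Function.support F)).toReal := by
        rw [integral_indicator (measurableSet_support hm), setIntegral_const, smul_eq_mul,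
          mul_comm, Measure.real]

lemma bddAbove_sqrt_conv (T : ConvexTree) {F : ℝ × ℝ → ℝ} (hF : Nice F) :
    BddAbove (Set.range fun w : Omega (T.squares : Set (ℤ × ℤ × ℤ)) =>
      Real.sqrt (convTheta F w.1.1.1 w.1.1.2 w.1.2)) := by
  obtain ⟨hm, ⟨CF, hCF⟩, hsupp, hpos⟩ := hF
  set kmin : ℤ := T.squares.inf' ⟨T.root, T.root_mem⟩ (fun a => a.1) with hkmin
  set tmin : ℝ := (2:ℝ)^kmin / 2 with htmindef
  have h0 : 0 < tmin := by positivity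
  refine ⟨Real.sqrt (CF^2 * (tmin^2)⁻¹ * (volume (Function.support F)).toReal), ?_⟩
  rintro x ⟨⟨⟨⟨p, q⟩, t⟩, hw⟩, rfl⟩
  simp only
  apply Real.sqrt_le_sqrt
  obtain ⟨a, ha, hmem⟩ := mem_iUnion₂.1 hw
  have hta : tmin ≤ t := by
    have h1 : kmin ≤ a.1 := Finset.inf'_le _ ha
    have h2 : (2:ℝ)^kmin ≤ (2:ℝ)^a.1 := by gcongr; norm_num
    have h3 := hmem.2.1
    calc tmin = (2:ℝ)^kmin / 2 := htmindef
      _ ≤ (2:ℝ)^a.1 / 2 := by linarith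
      _ ≤ t := h3
  exact convTheta_le F hm hCF hsupp h0 hta p q

lemma convTheta_le_sq_Msize (T : ConvexTree) {F : ℝ × ℝ → ℝ} (hF : Nice F) {x y s : ℝ}
    (hmem : ((x, y), s) ∈ Omega (T.squares : Set (ℤ × ℤ × ℤ))) :
    convTheta F x y s ≤ Msize F (T.squares : Set (ℤ × ℤ × ℤ)) ^ 2 := by
  have h0 : 0 ≤ convTheta F x y s := convTheta_nonneg F x y s
  have hb := bddAbove_sqrt_conv T hF
  have h1 := le_ciSup hb (⟨((x, y), s), hmem⟩ : Omega (T.squares : Set (ℤ × ℤ × ℤ)))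
  calc convTheta F x y s = Real.sqrt (convTheta F x y s) ^ 2 := (Real.sq_sqrt h0).symm
    _ ≤ Msize F (T.squares : Set (ℤ × ℤ × ℤ)) ^ 2 :=
        pow_le_pow_left₀ (Real.sqrt_nonneg _) h1 2

/-! ### The discrete distance and sums -/

/-- Distance of `u` to the interval `[m, m+1]`. -/
def dd (u : ℝ) (m : ℤ) : ℝ := max 0 (max ((m:ℝ) - u) (u - ((m:ℝ)+1)))

lemma dd_nonneg (u : ℝ) (m : ℤ) : 0 ≤ dd u m := le_max_left _ _

lemma dd_le {u x : ℝ} {m : ℤ} (hx : x ∈ Icc ((m:ℝ)) ((m:ℝ)+1)) : dd u m ≤ |u - x| := by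
  apply max_le (abs_nonneg _) (max_le ?_ ?_)
  · calc (m:ℝ) - u ≤ x - u := by linarith [hx.1]
      _ ≤ |u - x| := by rw [abs_sub_comm]; exact le_abs_self _
  · calc u - ((m:ℝ)+1) ≤ u - x := by linarith [hx.2]
      _ ≤ |u - x| := le_abs_self _

/-- Helper summand. -/
def hh (j : ℤ) : ℝ := (1 + (max 0 (|(j:ℝ)| - 1))^2)⁻¹

lemma hh_nonneg (j : ℤ) : 0 ≤ hh j := by
  rw [hh]; positivity

lemma hh_abs (N : ℕ) {j : ℤ} (hj : |(j:ℝ)| = (N:ℝ) + 1) : hh j = (1 + (N:ℝ)^2)⁻¹ := by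
  rw [hh, hj, add_sub_cancel_right, max_eq_right (Nat.cast_nonneg N)]

lemma sum_hh_Icc (N : ℕ) :
    ∑ j ∈ Finset.Icc (-(N:ℤ)) (N:ℤ), hh j ≤ 7 - 6/((N:ℝ)+1) := by
  induction N with
  | zero =>
    have h1 : Finset.Icc (-(0:ℕ):ℤ) ((0:ℕ):ℤ) = {0} := by decide
    rw [h1, Finset.sum_singleton]
    have h2 : hh 0 = 1 := by rw [hh]; norm_num
    rw [h2]; norm_num
  | succ N ih =>
    have hset : Finset.Icc (-((N+1:ℕ)):ℤ) ((N+1:ℕ):ℤ) =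
        insert (-((N+1:ℕ)):ℤ) (insert ((N+1:ℕ):ℤ) (Finset.Icc (-(N:ℤ)) (N:ℤ))) := by
      ext j
      simp only [Finset.mem_Icc, Finset.mem_insert]
      omega
    have hn1 : ((N+1:ℕ):ℤ) ∉ Finset.Icc (-(N:ℤ)) (N:ℤ) := by
      simp only [Finset.mem_Icc]; omega
    have hn2 : (-((N+1:ℕ)):ℤ) ∉ insert ((N+1:ℕ):ℤ) (Finset.Icc (-(N:ℤ)) (N:ℤ)) := by
      simp only [Finset.mem_insert, Finset.mem_Icc]; omega
    rw [hset, Finset.sum_insert hn2, Finset.sum_insert hn1]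
    have e1 : hh ((N+1:ℕ):ℤ) = (1 + (N:ℝ)^2)⁻¹ := by
      apply hh_abs
      rw [abs_of_nonneg (by positivity)]
      push_cast; ring
    have e2 : hh (-((N+1:ℕ)):ℤ) = (1 + (N:ℝ)^2)⁻¹ := by
      apply hh_abs
      push_cast
      rw [abs_neg, abs_of_nonneg (by positivity)]
    rw [e1, e2]
    have hkey : 2 * (1 + (N:ℝ)^2)⁻¹ ≤ 6/((N:ℝ)+1) - 6/((N:ℝ)+1+1) := by
      have hp3 : (0:ℝ) < 1 + (N:ℝ)^2 := by positivity
      have hd : 6/((N:ℝ)+1) - 6/((N:ℝ)+1+1) = 6 / (((N:ℝ)+1) * ((N:ℝ)+1+1)) := by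
        field_simp; ring
      rw [hd, show 2 * (1 + (N:ℝ)^2)⁻¹ = 2 / (1 + (N:ℝ)^2) by rw [div_eq_mul_inv]]
      rw [div_le_div_iff₀ hp3 (by positivity)]
      rcases Nat.eq_zero_or_pos N with h | h
      · subst h; norm_num
      · have h1 : (1:ℝ) ≤ (N:ℝ) := by exact_mod_cast h
        nlinarith
    have hcast : ((N+1:ℕ):ℝ) = (N:ℝ) + 1 := by push_cast; ring
    rw [hcast]
    linarith [ih]

lemma sum_hh_finset (t : Finset ℤ) : ∑ j ∈ t, hh j ≤ 7 := by
  classical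
  obtain ⟨N, hN⟩ : ∃ N : ℕ, ∀ j ∈ t, j ∈ Finset.Icc (-(N:ℤ)) (N:ℤ) := by
    refine ⟨t.sup fun j => j.natAbs, fun j hj => ?_⟩
    have h : j.natAbs ≤ t.sup fun j => j.natAbs := Finset.le_sup (f := fun j : ℤ => j.natAbs) hj
    simp only [Finset.mem_Icc]
    omega
  calc ∑ j ∈ t, hh j ≤ ∑ j ∈ Finset.Icc (-(N:ℤ)) (N:ℤ), hh j :=
        Finset.sum_le_sum_of_subset_of_nonneg (fun j hj => hN j hj) (fun j _ _ => hh_nonneg j)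
    _ ≤ 7 - 6/((N:ℝ)+1) := sum_hh_Icc N
    _ ≤ 7 := by
        have h1 : (0:ℝ) ≤ 6/((N:ℝ)+1) := by positivity
        linarith

lemma dd_inv_le_hh (u : ℝ) (m : ℤ) : (1 + dd u m ^ 2)⁻¹ ≤ hh (m - ⌊u⌋) := by
  have hu1 : (⌊u⌋:ℝ) ≤ u := Int.floor_le u
  have hu2 : u < (⌊u⌋:ℝ) + 1 := Int.lt_floor_add_one u
  have h1 : max 0 (|((m - ⌊u⌋ : ℤ):ℝ)| - 1) ≤ dd u m := by
    apply max_le (dd_nonneg u m)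
    have hdd1 : (m:ℝ) - u ≤ dd u m := le_trans (le_max_left _ _) (le_max_right _ _)
    have hdd2 : u - ((m:ℝ)+1) ≤ dd u m := le_trans (le_max_right _ _) (le_max_right _ _)
    rcases le_or_gt m ⌊u⌋ with h | h
    · have hmr : (m:ℝ) ≤ (⌊u⌋:ℝ) := by exact_mod_cast h
      have habs : |((m - ⌊u⌋ : ℤ):ℝ)| = (⌊u⌋:ℝ) - m := by
        push_cast
        rw [abs_of_nonpos (by linarith)]
        ring
      rw [habs]
      linarith
    · have hmr : (⌊u⌋:ℝ) ≤ (m:ℝ) := by exact_mod_cast h.le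
      have habs : |((m - ⌊u⌋ : ℤ):ℝ)| = (m:ℝ) - ⌊u⌋ := by
        push_cast
        rw [abs_of_nonneg (by linarith)]
      rw [habs]
      linarith
  have hr : 0 ≤ max 0 (|((m - ⌊u⌋ : ℤ):ℝ)| - 1) := le_max_left _ _
  rw [hh]
  apply inv_anti₀ (by positivity)
  nlinarith [dd_nonneg u m]

lemma sum_dd (t : Finset ℤ) (u : ℝ) : ∑ m ∈ t, (1 + dd u m ^ 2)⁻¹ ≤ 7 := by
  classical
  calc ∑ m ∈ t, (1 + dd u m ^ 2)⁻¹ ≤ ∑ m ∈ t, hh (m - ⌊u⌋) :=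
        Finset.sum_le_sum fun m _ => dd_inv_le_hh u m
    _ = ∑ j ∈ t.image (fun m => m - ⌊u⌋), hh j :=
        (Finset.sum_image (by intro x _ y _ h; exact sub_left_injective h)).symm
    _ ≤ 7 := sum_hh_finset _

lemma sum_prod_bound (k : ℤ) (s : Finset (ℤ × ℤ × ℤ)) (hs : ∀ a ∈ s, a.1 = k) (u v : ℝ) :
    ∑ a ∈ s, (1 + dd u a.2.1 ^ 2)⁻¹ * (1 + dd v a.2.2 ^ 2)⁻¹ ≤ 49 := by
  classical
  have hinj : ∀ x ∈ s, ∀ y ∈ s, x.2 = y.2 → x = y := by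
    intro x hx y hy h
    exact Prod.ext ((hs x hx).trans (hs y hy).symm) h
  have e1 : ∑ a ∈ s, (1 + dd u a.2.1 ^ 2)⁻¹ * (1 + dd v a.2.2 ^ 2)⁻¹ =
      ∑ b ∈ s.image Prod.snd, (1 + dd u b.1 ^ 2)⁻¹ * (1 + dd v b.2 ^ 2)⁻¹ :=
    (Finset.sum_image (f := fun b : ℤ × ℤ => (1 + dd u b.1 ^ 2)⁻¹ * (1 + dd v b.2 ^ 2)⁻¹)
      hinj).symm
  rw [e1]
  set A := (s.image Prod.snd).image Prod.fst with hA
  set B := (s.image Prod.snd).image Prod.snd with hB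
  have hsub : s.image Prod.snd ⊆ A ×ˢ B := by
    intro b hb
    rw [Finset.mem_product]
    exact ⟨Finset.mem_image_of_mem _ hb, Finset.mem_image_of_mem _ hb⟩
  calc ∑ b ∈ s.image Prod.snd, (1 + dd u b.1 ^ 2)⁻¹ * (1 + dd v b.2 ^ 2)⁻¹
      ≤ ∑ b ∈ A ×ˢ B, (1 + dd u b.1 ^ 2)⁻¹ * (1 + dd v b.2 ^ 2)⁻¹ :=
        Finset.sum_le_sum_of_subset_of_nonneg hsub (fun b _ _ => by positivity)
    _ = (∑ m ∈ A, (1 + dd u m ^ 2)⁻¹) * (∑ n ∈ B, (1 + dd v n ^ 2)⁻¹) := by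
        rw [Finset.sum_mul_sum, Finset.sum_product]
    _ ≤ 7 * 7 := by
        apply mul_le_mul (sum_dd A u) (sum_dd B v)
          (Finset.sum_nonneg fun n _ => by positivity) (by norm_num)
    _ = 49 := by norm_num

/-! ### The main pointwise estimate -/

lemma measurableSet_dSq (a : ℤ × ℤ × ℤ) : MeasurableSet (dSq a) :=
  measurableSet_Icc.prod measurableSet_Icc

lemma core_ineq {s0 t A B X Y : ℝ} (hs0 : 0 < s0) (ht1 : s0/2 ≤ t) (ht2 : t ≤ s0)
    (hA0 : 0 ≤ A) (hB0 : 0 ≤ B) (hXA : A^2 ≤ X) (hXB : B^2 ≤ X)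
    (hY0 : 0 ≤ Y) (hY2 : Y ≤ 2) :
    (t^2)⁻¹ * (1 + X^2)⁻¹ ≤
      (40 * ((1 + A^2)⁻¹ * (1 + B^2)⁻¹)) * ((s0^2)⁻¹ * (1 + Y^2)⁻¹) := by
  have hX0 : 0 ≤ X := le_trans (sq_nonneg A) hXA
  have ht0 : 0 < t := lt_of_lt_of_le (by positivity) ht1
  have hd : (1 + X^2)⁻¹ ≤ 2 * ((1 + A^2)⁻¹ * (1 + B^2)⁻¹) := by
    have h5 : (1 + A^2) * (1 + B^2) ≤ 2 * (1 + X^2) := by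
      have h6 : (1 + A^2) * (1 + B^2) ≤ (1 + X) * (1 + X) :=
        mul_le_mul (by linarith) (by linarith) (by positivity) (by positivity)
      nlinarith [sq_nonneg (X - 1)]
    calc (1 + X^2)⁻¹ ≤ (((1 + A^2) * (1 + B^2))/2)⁻¹ :=
          inv_anti₀ (by positivity) (by linarith)
      _ = 2 * ((1 + A^2)⁻¹ * (1 + B^2)⁻¹) := by
          rw [inv_div, div_eq_mul_inv, mul_inv]
  have he : (t^2)⁻¹ ≤ 4 * (s0^2)⁻¹ := by
    calc (t^2)⁻¹ ≤ (s0^2/4)⁻¹ := inv_anti₀ (by positivity) (by nlinarith)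
      _ = 4 * (s0^2)⁻¹ := by rw [inv_div, div_eq_mul_inv]
  have hf : (5:ℝ)⁻¹ ≤ (1 + Y^2)⁻¹ := inv_anti₀ (by positivity) (by nlinarith)
  calc (t^2)⁻¹ * (1 + X^2)⁻¹
      ≤ (4 * (s0^2)⁻¹) * (2 * ((1 + A^2)⁻¹ * (1 + B^2)⁻¹)) :=
        mul_le_mul he hd (by positivity) (by positivity)
    _ = (40 * ((1 + A^2)⁻¹ * (1 + B^2)⁻¹)) * ((s0^2)⁻¹ * (5:ℝ)⁻¹) := by ring
    _ ≤ (40 * ((1 + A^2)⁻¹ * (1 + B^2)⁻¹)) * ((s0^2)⁻¹ * (1 + Y^2)⁻¹) := by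
        apply mul_le_mul_of_nonneg_left
          (mul_le_mul_of_nonneg_left hf (by positivity)) (by positivity)

set_option maxHeartbeats 2000000 in
lemma pointwise_est (T : ConvexTree) (k : ℤ) (F : ℝ × ℝ → ℝ) (hF : Nice F)
    (p q t : ℝ) (ht1 : (2:ℝ)^k / 2 ≤ t) (ht2 : t ≤ (2:ℝ)^k) :
    convTheta ((Tk T k).indicator F) p q t ≤
      1960 * Msize F (T.squares : Set (ℤ × ℤ × ℤ)) ^ 2 := by
  classical
  set s0 : ℝ := (2:ℝ)^k with hs0def
  have hs0 : 0 < s0 := by positivity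
  have ht0 : 0 < t := lt_of_lt_of_le (by positivity) ht1
  set lvl : Finset (ℤ × ℤ × ℤ) := T.squares.filter (fun a => a.1 = k) with hlvl
  set M : ℝ := Msize F (T.squares : Set (ℤ × ℤ × ℤ)) with hM
  -- Step A
  have stepA : convTheta ((Tk T k).indicator F) p q t ≤
      ∑ a ∈ lvl, ∫ z : ℝ × ℝ, (dSq a).indicator (core F p q t) z := by
    rw [convTheta_eq,
      ← integral_finset_sum lvl (fun a _ =>
        (integrable_core hF p q t).indicator (measurableSet_dSq a))]
    apply integral_mono_of_nonneg
      (Filter.Eventually.of_forall (core_nonneg _ p q t))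
      (integrable_finset_sum lvl (fun a _ =>
        (integrable_core hF p q t).indicator (measurableSet_dSq a)))
      (Filter.Eventually.of_forall fun z => ?_)
    by_cases hz : z ∈ Tk T k
    · obtain ⟨a, ha, hza⟩ : ∃ a ∈ lvl, z ∈ dSq a := by
        obtain ⟨a, ha, hza⟩ := mem_iUnion₂.1 hz
        exact ⟨a, Finset.mem_filter.2 ⟨ha.1, ha.2⟩, hza⟩
      have e1 : core ((Tk T k).indicator F) p q t z = core F p q t z := by
        simp only [core, Set.indicator_of_mem hz]
      have e2 : core F p q t z = (dSq a).indicator (core F p q t) z := by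
        rw [Set.indicator_of_mem hza]
      rw [e1, e2]
      exact Finset.single_le_sum
        (fun b _ => Set.indicator_nonneg (fun y _ => core_nonneg F p q t y) z) ha
    · have e1 : core ((Tk T k).indicator F) p q t z = 0 := by
        simp [core, Set.indicator_of_notMem hz]
      rw [e1]
      exact Finset.sum_nonneg fun b _ =>
        Set.indicator_nonneg (fun y _ => core_nonneg F p q t y) z
  -- Step B
  have stepB : ∀ a ∈ lvl, ∫ z : ℝ × ℝ, (dSq a).indicator (core F p q t) z ≤
      (40 * ((1 + dd (p/s0) a.2.1 ^ 2)⁻¹ * (1 + dd (q/s0) a.2.2 ^ 2)⁻¹)) * M ^ 2 := by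
    intro a ha
    obtain ⟨haT, hak⟩ := Finset.mem_filter.1 ha
    set m := a.2.1 with hm
    set n := a.2.2 with hn
    set Ka : ℝ := 40 * ((1 + dd (p/s0) m ^ 2)⁻¹ * (1 + dd (q/s0) n ^ 2)⁻¹) with hKa
    have hKa0 : 0 ≤ Ka := by positivity
    set xa : ℝ := s0 * m with hxa
    set ya : ℝ := s0 * n with hya
    have hsa : (2:ℝ)^a.1 = s0 := by rw [hak]
    have hmemΩ : ((xa, ya), s0) ∈ Omega (T.squares : Set (ℤ × ℤ × ℤ)) := by
      apply mem_iUnion₂.2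
      refine ⟨a, haT, ?_, ?_⟩
      · constructor
        · rw [hsa]
          exact ⟨le_refl _, by nlinarith⟩
        · rw [hsa]
          exact ⟨le_refl _, by nlinarith⟩
      · rw [hsa]
        exact ⟨by linarith, le_refl _⟩
    -- pointwise bound on the square
    have hpt : ∀ z ∈ dSq a, core F p q t z ≤ Ka * core F xa ya s0 z := by
      intro z hz
      obtain ⟨hz1, hz2⟩ := hz
      rw [hsa] at hz1 hz2
      have hts : t^2 ≤ s0^2 := by nlinarith
      have hz1' : z.1 / s0 ∈ Icc ((m:ℝ)) ((m:ℝ)+1) := by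
        constructor
        · rw [le_div_iff₀ hs0]; nlinarith [hz1.1]
        · rw [div_le_iff₀ hs0]; nlinarith [hz1.2]
      have hz2' : z.2 / s0 ∈ Icc ((n:ℝ)) ((n:ℝ)+1) := by
        constructor
        · rw [le_div_iff₀ hs0]; nlinarith [hz2.1]
        · rw [div_le_iff₀ hs0]; nlinarith [hz2.2]
      have hXA : dd (p/s0) m ^ 2 ≤ ((p - z.1)/t)^2 + ((q - z.2)/t)^2 := by
        have h1 : dd (p/s0) m ≤ |p/s0 - z.1/s0| := dd_le hz1'
        have h2 : p/s0 - z.1/s0 = (p - z.1)/s0 := by ring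
        have h3 : dd (p/s0) m ^ 2 ≤ ((p - z.1)/s0)^2 := by
          have h := pow_le_pow_left₀ (dd_nonneg _ _) h1 2
          rwa [sq_abs, h2] at h
        have h4 : ((p - z.1)/s0)^2 ≤ ((p - z.1)/t)^2 := by
          rw [div_pow, div_pow, div_le_div_iff₀ (by positivity) (by positivity)]
          exact mul_le_mul_of_nonneg_left hts (sq_nonneg _)
        calc dd (p/s0) m ^ 2 ≤ ((p - z.1)/s0)^2 := h3
          _ ≤ ((p - z.1)/t)^2 := h4
          _ ≤ ((p - z.1)/t)^2 + ((q - z.2)/t)^2 := le_add_of_nonneg_right (sq_nonneg _)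
      have hXB : dd (q/s0) n ^ 2 ≤ ((p - z.1)/t)^2 + ((q - z.2)/t)^2 := by
        have h1 : dd (q/s0) n ≤ |q/s0 - z.2/s0| := dd_le hz2'
        have h2 : q/s0 - z.2/s0 = (q - z.2)/s0 := by ring
        have h3 : dd (q/s0) n ^ 2 ≤ ((q - z.2)/s0)^2 := by
          have h := pow_le_pow_left₀ (dd_nonneg _ _) h1 2
          rwa [sq_abs, h2] at h
        have h4 : ((q - z.2)/s0)^2 ≤ ((q - z.2)/t)^2 := by
          rw [div_pow, div_pow, div_le_div_iff₀ (by positivity) (by positivity)]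
          exact mul_le_mul_of_nonneg_left hts (sq_nonneg _)
        calc dd (q/s0) n ^ 2 ≤ ((q - z.2)/s0)^2 := h3
          _ ≤ ((q - z.2)/t)^2 := h4
          _ ≤ ((p - z.1)/t)^2 + ((q - z.2)/t)^2 := le_add_of_nonneg_left (sq_nonneg _)
      have hY2 : ((xa - z.1)/s0)^2 + ((ya - z.2)/s0)^2 ≤ 2 := by
        have hx1 : ((xa - z.1)/s0)^2 ≤ 1 := by
          rw [div_pow, div_le_one (by positivity)]
          have e1 := hz1.1
          have e2 := hz1.2
          rw [hxa]
          nlinarith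
        have hx2 : ((ya - z.2)/s0)^2 ≤ 1 := by
          rw [div_pow, div_le_one (by positivity)]
          have e1 := hz2.1
          have e2 := hz2.2
          rw [hya]
          nlinarith
        linarith
      have hcore : (t^2)⁻¹ * theta ((p - z.1)/t, (q - z.2)/t) ≤
          Ka * ((s0^2)⁻¹ * theta ((xa - z.1)/s0, (ya - z.2)/s0)) := by
        rw [theta_eq, theta_eq, hKa]
        exact core_ineq hs0 ht1 ht2 (dd_nonneg _ _) (dd_nonneg _ _) hXA hXB
          (by positivity) hY2
      calc core F p q t z
          = (F z)^2 * ((t^2)⁻¹ * theta ((p - z.1)/t, (q - z.2)/t)) := rfl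
        _ ≤ (F z)^2 * (Ka * ((s0^2)⁻¹ * theta ((xa - z.1)/s0, (ya - z.2)/s0))) :=
            mul_le_mul_of_nonneg_left hcore (sq_nonneg _)
        _ = Ka * core F xa ya s0 z := by rw [core]; ring
    -- integrate
    have hint : ∫ z : ℝ × ℝ, (dSq a).indicator (core F p q t) z ≤
        Ka * convTheta F xa ya s0 := by
      calc ∫ z : ℝ × ℝ, (dSq a).indicator (core F p q t) z
          ≤ ∫ z : ℝ × ℝ, Ka * core F xa ya s0 z := by
            apply integral_mono_of_nonneg
              (Filter.Eventually.of_forall fun z =>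
                Set.indicator_nonneg (fun y _ => core_nonneg F p q t y) z)
              ((integrable_core hF xa ya s0).const_mul Ka)
              (Filter.Eventually.of_forall fun z => ?_)
            show (dSq a).indicator (core F p q t) z ≤ Ka * core F xa ya s0 z
            by_cases hz : z ∈ dSq a
            · rw [Set.indicator_of_mem hz]
              exact hpt z hz
            · rw [Set.indicator_of_notMem hz]
              exact mul_nonneg hKa0 (core_nonneg F xa ya s0 z)
        _ = Ka * convTheta F xa ya s0 := by
            rw [convTheta_eq]
            exact integral_const_mul Ka _
    calc ∫ z : ℝ × ℝ, (dSq a).indicator (core F p q t) z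
        ≤ Ka * convTheta F xa ya s0 := hint
      _ ≤ Ka * M^2 := mul_le_mul_of_nonneg_left (convTheta_le_sq_Msize T hF hmemΩ) hKa0
  -- combine
  have hM2 : 0 ≤ M^2 := sq_nonneg _
  have hsum := sum_prod_bound k lvl (fun a ha => (Finset.mem_filter.1 ha).2) (p/s0) (q/s0)
  calc convTheta ((Tk T k).indicator F) p q t
      ≤ ∑ a ∈ lvl, ∫ z : ℝ × ℝ, (dSq a).indicator (core F p q t) z := stepA
    _ ≤ ∑ a ∈ lvl, (40 * ((1 + dd (p/s0) a.2.1 ^ 2)⁻¹ * (1 + dd (q/s0) a.2.2 ^ 2)⁻¹)) * M^2 :=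
        Finset.sum_le_sum stepB
    _ = (∑ a ∈ lvl, (1 + dd (p/s0) a.2.1 ^ 2)⁻¹ * (1 + dd (q/s0) a.2.2 ^ 2)⁻¹) * (40 * M^2) := by
        rw [Finset.sum_mul]
        congr 1
        ext a
        ring
    _ ≤ 49 * (40 * M^2) := by
        apply mul_le_mul_of_nonneg_right hsum (by positivity)
    _ = 1960 * M^2 := by ring


/-- The claim `M(F·1_{T_k}, 𝒯_k^c) ≲ M(F,𝒯)` together with its pointwise form. -/
theorem Msize_indicator_le : ∃ C : ℝ, 0 < C ∧
    ∀ (T : ConvexTree) (k : ℤ) (F : ℝ × ℝ → ℝ), Nice F →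
      (Msize ((Tk T k).indicator F) {a : ℤ × ℤ × ℤ | a.1 = k ∧ a ∉ T.squares} ≤
        C * Msize F (T.squares : Set (ℤ × ℤ × ℤ))) ∧
      ∀ p q t : ℝ, ((p, q), t) ∈ Omega {a : ℤ × ℤ × ℤ | a.1 = k ∧ a ∉ T.squares} →
        Real.sqrt (convTheta ((Tk T k).indicator F) p q t) ≤
          C * Msize F (T.squares : Set (ℤ × ℤ × ℤ)) := by
  refine ⟨50, by norm_num, fun T k F hF => ?_⟩
  set M : ℝ := Msize F (T.squares : Set (ℤ × ℤ × ℤ)) with hM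
  have hM0 : 0 ≤ M := Real.iSup_nonneg fun _ => Real.sqrt_nonneg _
  have hpw : ∀ p q t : ℝ, ((p, q), t) ∈ Omega {a : ℤ × ℤ × ℤ | a.1 = k ∧ a ∉ T.squares} →
      Real.sqrt (convTheta ((Tk T k).indicator F) p q t) ≤ 50 * M := by
    intro p q t hmem
    obtain ⟨a, ha, hmem'⟩ := mem_iUnion₂.1 hmem
    have hak : a.1 = k := ha.1
    have ht := hmem'.2
    rw [hak] at ht
    have hest := pointwise_est T k F hF p q t ht.1 ht.2
    calc Real.sqrt (convTheta ((Tk T k).indicator F) p q t)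
        ≤ Real.sqrt (1960 * M^2) := Real.sqrt_le_sqrt hest
      _ ≤ Real.sqrt ((50 * M)^2) := Real.sqrt_le_sqrt (by nlinarith)
      _ = 50 * M := Real.sqrt_sq (by positivity)
  refine ⟨?_, hpw⟩
  apply Real.iSup_le _ (by positivity)
  rintro ⟨⟨⟨p, q⟩, t⟩, hw⟩
  exact hpw p q t hw

end
end
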